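/- Let φ : ℳ → P(ℕ)/fin be a Boolean-algebra embedding, A ⊆ ℕ infinite, and f, g ∈ ω^ω with f ≤* g. For h ∈ ω^ω put B_{h,A} = {(n,s) : n ∈ A, s ∈ 2^{h(n)}} and C_h = {(n,s) : n ∈ A, |s| ≤ h(n)}. Suppose Φ_f and Φ_g are liftings of φ such that for each h ∈ {f, g}: Φ_h(O) = Φ_h[O] for all O ⊆ B_{h,A}; Φ_h(n,s) ∩ Φ_h(m,t) = ∅ whenever the basic sets {n} × [s] and {m} × [t] are disjoint; and Φ_h(n,s) = Φ_h(n,s⌢0) ∪ Φ_h(n,s⌢1) whenever n ∈ A and |s| < h(n). Then Φ_g(n,s) = Φ_f(n,s) for all but finitely many (n,s) ∈ C_f. -/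

import Mathlib

open Set MeasureTheory
open scoped ENNReal

namespace Paper

/-- `X` and `Y` agree modulo a finite set. -/
def AlmostEq {α : Type} (X Y : Set α) : Prop := (symmDiff X Y).Finite

/-- the "equal mod finite" setoid on `Set α` -/
def finSetoid (α : Type) : Setoid (Set α) where
  r X Y := (symmDiff X Y).Finite
  iseqv := by
    constructor
    · intro X; simp
    · intro X Y h; rwa [symmDiff_comm]
    · intro X Y Z h1 h2
      exact (h1.union h2).subset (symmDiff_triangle X Y Z)

/-- the quotient Boolean algebra `P(α)/fin` -/
def PFin (α : Type) : Type := Quotient (finSetoid α)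

/-- the class of `X` in `P(α)/fin` -/
def PFin.mk {α : Type} (X : Set α) : PFin α := Quotient.mk (finSetoid α) X

/-- join in `P(α)/fin` -/
def PFin.sup {α : Type} : PFin α → PFin α → PFin α :=
  Quotient.lift₂ (fun X Y => PFin.mk (X ∪ Y))
    (by
      intro X Y X' Y' hX hY
      refine Quotient.sound ?_
      have hX' : (symmDiff X X').Finite := hX
      have hY' : (symmDiff Y Y').Finite := hY
      show (symmDiff (X ∪ Y) (X' ∪ Y')).Finite
      refine (hX'.union hY').subset ?_
      intro x hx
      simp only [Set.mem_symmDiff, Set.mem_union] at hx ⊢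
      tauto)

/-- meet in `P(α)/fin` -/
def PFin.inf {α : Type} : PFin α → PFin α → PFin α :=
  Quotient.lift₂ (fun X Y => PFin.mk (X ∩ Y))
    (by
      intro X Y X' Y' hX hY
      refine Quotient.sound ?_
      have hX' : (symmDiff X X').Finite := hX
      have hY' : (symmDiff Y Y').Finite := hY
      show (symmDiff (X ∩ Y) (X' ∩ Y')).Finite
      refine (hX'.union hY').subset ?_
      intro x hx
      simp only [Set.mem_symmDiff, Set.mem_inter_iff, Set.mem_union] at hx ⊢
      tauto)

/-- complement in `P(α)/fin` -/
def PFin.compl {α : Type} : PFin α → PFin α :=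
  Quotient.lift (fun X => PFin.mk Xᶜ)
    (by
      intro X Y h
      refine Quotient.sound ?_
      have h' : (symmDiff X Y).Finite := h
      show (symmDiff Xᶜ Yᶜ).Finite
      have e : symmDiff Xᶜ Yᶜ = symmDiff X Y := by
        ext x; simp only [Set.mem_symmDiff, Set.mem_compl_iff]; tauto
      rw [e]; exact h')

/-- bottom of `P(α)/fin` -/
def PFin.bot {α : Type} : PFin α := PFin.mk (∅ : Set α)

/-- top of `P(α)/fin` -/
def PFin.top {α : Type} : PFin α := PFin.mk (Set.univ : Set α)

/-- the Cantor set `2^ω` -/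
abbrev Cant : Type := ℕ → Bool

/-- the space `C = ω × 2^ω` -/
abbrev CSp : Type := ℕ × Cant

/-- the cylinder set `[s] = {x : s ⊂ x}` determined by a finite binary sequence -/
def cyl (s : List Bool) : Set Cant := {x | ∀ i : Fin s.length, x i.1 = s.get i}

/-- the basic clopen set `{n} × [s]` of `C` -/
def basic (n : ℕ) (s : List Bool) : Set CSp := {n} ×ˢ cyl s

lemma measurableSet_cyl (s : List Bool) : MeasurableSet (cyl s) := by
  have h : cyl s = ⋂ i : Fin s.length, (fun x : Cant => x i.1) ⁻¹' {s.get i} := by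
    ext x; simp [cyl]
  rw [h]
  exact MeasurableSet.iInter fun i => (measurable_pi_apply i.1) (measurableSet_singleton _)

lemma measurableSet_basic (n : ℕ) (s : List Bool) : MeasurableSet (basic n s) :=
  (measurableSet_singleton n).prod (measurableSet_cyl s)

/-- a measure on `C` is the right one when it gives each basic set `{n} × [s]`
measure `2^{-|s|}` (this determines the measure on all Borel sets). -/
def IsMeasureOK (μ : Measure CSp) : Prop :=
  ∀ (n : ℕ) (s : List Bool), μ (basic n s) = (2 : ℝ≥0∞)⁻¹ ^ s.length

/-- Borel subsets of `C` -/
abbrev BSet : Type := {A : Set CSp // MeasurableSet A}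

/-- the "equal modulo a null set" setoid on Borel sets of `C` -/
def measSetoid (μ : Measure CSp) : Setoid BSet where
  r A B := μ (symmDiff (A : Set CSp) (B : Set CSp)) = 0
  iseqv := by
    constructor
    · intro A; simp
    · intro A B h; rwa [symmDiff_comm]
    · intro A B C h1 h2
      exact measure_mono_null (symmDiff_triangle (A : Set CSp) (B : Set CSp) (C : Set CSp))
        (measure_union_null h1 h2)

/-- the measure algebra `ℳ = Bor(C)/𝒩` -/
def MAlg (μ : Measure CSp) : Type := Quotient (measSetoid μ)

/-- the class of a Borel set in the measure algebra -/
def MAlg.mk (μ : Measure CSp) (A : BSet) : MAlg μ := Quotient.mk (measSetoid μ) A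

variable {μ : Measure CSp}

/-- join in the measure algebra -/
def MAlg.sup : MAlg μ → MAlg μ → MAlg μ :=
  Quotient.lift₂ (fun A B : BSet => MAlg.mk μ ⟨(A : Set CSp) ∪ (B : Set CSp), A.2.union B.2⟩)
    (by
      intro A B A' B' hA hB
      refine Quotient.sound ?_
      have hA' : μ (symmDiff (A : Set CSp) (A' : Set CSp)) = 0 := hA
      have hB' : μ (symmDiff (B : Set CSp) (B' : Set CSp)) = 0 := hB
      show μ (symmDiff ((A : Set CSp) ∪ (B : Set CSp)) ((A' : Set CSp) ∪ (B' : Set CSp))) = 0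
      refine measure_mono_null ?_ (measure_union_null hA' hB')
      intro x hx
      simp only [Set.mem_symmDiff, Set.mem_union] at hx ⊢
      tauto)

/-- meet in the measure algebra -/
def MAlg.inf : MAlg μ → MAlg μ → MAlg μ :=
  Quotient.lift₂ (fun A B : BSet => MAlg.mk μ ⟨(A : Set CSp) ∩ (B : Set CSp), A.2.inter B.2⟩)
    (by
      intro A B A' B' hA hB
      refine Quotient.sound ?_
      have hA' : μ (symmDiff (A : Set CSp) (A' : Set CSp)) = 0 := hA
      have hB' : μ (symmDiff (B : Set CSp) (B' : Set CSp)) = 0 := hB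
      show μ (symmDiff ((A : Set CSp) ∩ (B : Set CSp)) ((A' : Set CSp) ∩ (B' : Set CSp))) = 0
      refine measure_mono_null ?_ (measure_union_null hA' hB')
      intro x hx
      simp only [Set.mem_symmDiff, Set.mem_inter_iff, Set.mem_union] at hx ⊢
      tauto)

/-- complement in the measure algebra -/
def MAlg.compl : MAlg μ → MAlg μ :=
  Quotient.lift (fun A : BSet => MAlg.mk μ ⟨(A : Set CSp)ᶜ, A.2.compl⟩)
    (by
      intro A B h
      refine Quotient.sound ?_
      have h' : μ (symmDiff (A : Set CSp) (B : Set CSp)) = 0 := h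
      show μ (symmDiff (A : Set CSp)ᶜ (B : Set CSp)ᶜ) = 0
      have e : symmDiff (A : Set CSp)ᶜ (B : Set CSp)ᶜ = symmDiff (A : Set CSp) (B : Set CSp) := by
        ext x; simp only [Set.mem_symmDiff, Set.mem_compl_iff]; tauto
      rw [e]; exact h')

/-- bottom of the measure algebra -/
def MAlg.bot : MAlg μ := MAlg.mk μ ⟨∅, MeasurableSet.empty⟩

/-- top of the measure algebra -/
def MAlg.top : MAlg μ := MAlg.mk μ ⟨Set.univ, MeasurableSet.univ⟩

/-- `φ : ℳ → P(ℕ)/fin` is a Boolean-algebra embedding -/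
structure IsEmbedding (μ : Measure CSp) (φ : MAlg μ → PFin ℕ) : Prop where
  injective : Function.Injective φ
  map_sup : ∀ a b, φ (MAlg.sup a b) = PFin.sup (φ a) (φ b)
  map_inf : ∀ a b, φ (MAlg.inf a b) = PFin.inf (φ a) (φ b)
  map_compl : ∀ a, φ (MAlg.compl a) = PFin.compl (φ a)
  map_bot : φ MAlg.bot = PFin.bot
  map_top : φ MAlg.top = PFin.top

/-- the open subset of `C` coded by a set `O` of pairs `(n,s)` -/
def openSet (O : Set (ℕ × List Bool)) : Set CSp := ⋃ p ∈ O, basic p.1 p.2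

lemma measurableSet_openSet (O : Set (ℕ × List Bool)) : MeasurableSet (openSet O) :=
  MeasurableSet.biUnion O.to_countable fun p _ => measurableSet_basic p.1 p.2

/-- the element of the measure algebra coded by `O` -/
def classOf (μ : Measure CSp) (O : Set (ℕ × List Bool)) : MAlg μ :=
  MAlg.mk μ ⟨openSet O, measurableSet_openSet O⟩

/-- `Φ` is a lifting of `φ : ℳ → P(ℕ)/fin`: it chooses a representative of `φ a` for every `a` -/
def IsLifting {μ : Measure CSp} (φ : MAlg μ → PFin ℕ) (Φ : MAlg μ → Set ℕ) : Prop :=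
  ∀ a, PFin.mk (Φ a) = φ a

/-- `Φ(O)`: the value of `Φ` at the class of the open set coded by `O` -/
def PhiSet {μ : Measure CSp} (Φ : MAlg μ → Set ℕ) (O : Set (ℕ × List Bool)) : Set ℕ :=
  Φ (classOf μ O)

/-- `Φ(n,s)` -/
def PhiPt {μ : Measure CSp} (Φ : MAlg μ → Set ℕ) (n : ℕ) (s : List Bool) : Set ℕ :=
  Φ (classOf μ {(n, s)})

/-- `Φ[O] = ⋃ {Φ(n,s) : (n,s) ∈ O}` -/
def PhiUnion {μ : Measure CSp} (Φ : MAlg μ → Set ℕ) (O : Set (ℕ × List Bool)) : Set ℕ :=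
  ⋃ p ∈ O, PhiPt Φ p.1 p.2

/-- the layer `B_f = {(n,s) : s ∈ 2^{f(n)}}` -/
def Bf (f : ℕ → ℕ) : Set (ℕ × List Bool) := {p | p.2.length = f p.1}

/-- the layer `B_{f,A} = {(n,s) : n ∈ A, s ∈ 2^{f(n)}}` -/
def BfA (f : ℕ → ℕ) (A : Set ℕ) : Set (ℕ × List Bool) := {p | p.1 ∈ A ∧ p.2.length = f p.1}


/-! ### Auxiliary lemmas -/

/-- extensions of `s` of length `L` -/
def exts (s : List Bool) (L : ℕ) : Set (List Bool) := {t | s <+: t ∧ t.length = L}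

lemma exts_split {s : List Bool} {L : ℕ} (h : s.length < L) :
    exts s L = exts (s ++ [false]) L ∪ exts (s ++ [true]) L := by
  ext t
  simp only [exts, Set.mem_setOf_eq, Set.mem_union]
  constructor
  · rintro ⟨⟨r, rfl⟩, hlen⟩
    cases r with
    | nil => simp at hlen h; omega
    | cons b r' =>
      cases b
      · exact Or.inl ⟨⟨r', by simp⟩, hlen⟩
      · exact Or.inr ⟨⟨r', by simp⟩, hlen⟩
  · rintro (⟨hp, hlen⟩ | ⟨hp, hlen⟩)
    · exact ⟨(List.prefix_append s [false]).trans hp, hlen⟩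
    · exact ⟨(List.prefix_append s [true]).trans hp, hlen⟩

lemma cyl_mono {s t : List Bool} (h : s <+: t) : cyl t ⊆ cyl s := by
  intro x hx i
  obtain ⟨r, rfl⟩ := h
  have hi : (i : ℕ) < (s ++ r).length := by simp; omega
  have := hx ⟨i.1, hi⟩
  simpa [List.getElem_append_left i.2] using this

lemma cyl_eq_iUnion {s : List Bool} {L : ℕ} (h : s.length ≤ L) :
    cyl s = ⋃ t ∈ exts s L, cyl t := by
  apply subset_antisymm
  · intro x hx
    refine Set.mem_biUnion (x := List.ofFn (fun i : Fin L => x i)) ?_ ?_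
    · constructor
      · rw [List.prefix_iff_eq_take]
        apply List.ext_getElem
        · simp [h]
        · intro i h1 h2
          have := hx ⟨i, h1⟩
          simp [List.getElem_take, List.getElem_ofFn, this]
      · simp
    · intro i
      simp [List.get_eq_getElem, List.getElem_ofFn]
  · exact Set.iUnion₂_subset fun t ht => cyl_mono ht.1

lemma basic_disj_ne {n m : ℕ} (h : n ≠ m) (s t : List Bool) :
    basic n s ∩ basic m t = ∅ := by
  ext ⟨a, x⟩
  simp only [basic, Set.mem_inter_iff, Set.mem_prod, Set.mem_singleton_iff, Set.mem_empty_iff_false,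
    iff_false, not_and]
  rintro ⟨rfl, -⟩ h2 -
  exact h h2

lemma basic_disj_same {n : ℕ} {s t : List Bool} (hlen : s.length = t.length) (h : s ≠ t) :
    basic n s ∩ basic n t = ∅ := by
  ext ⟨a, x⟩
  simp only [basic, Set.mem_inter_iff, Set.mem_prod, Set.mem_singleton_iff, Set.mem_empty_iff_false,
    iff_false, not_and]
  rintro ⟨rfl, hs⟩ - ht
  refine h (List.ext_get hlen fun i h1 h2 => ?_)
  have e1 := hs ⟨i, h1⟩
  have e2 := ht ⟨i, h2⟩
  rw [← e1, ← e2]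

/-- exactness iterated: `Φ(n,s)` is the union of `Φ(n,t)` over extensions `t` of length `L`. -/
lemma phiPt_level {μ : Measure CSp} (Φ : MAlg μ → Set ℕ) (h : ℕ → ℕ) (A : Set ℕ)
    (hex : ∀ n ∈ A, ∀ s : List Bool, s.length < h n →
      PhiPt Φ n s = PhiPt Φ n (s ++ [false]) ∪ PhiPt Φ n (s ++ [true]))
    {n : ℕ} (hn : n ∈ A) {L : ℕ} (hL : L ≤ h n) :
    ∀ s : List Bool, s.length ≤ L →
      PhiPt Φ n s = ⋃ t ∈ exts s L, PhiPt Φ n t := by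
  have key : ∀ d : ℕ, ∀ s : List Bool, s.length + d = L →
      PhiPt Φ n s = ⋃ t ∈ exts s L, PhiPt Φ n t := by
    intro d
    induction d with
    | zero =>
      intro s hs
      have : exts s L = {s} := by
        ext t
        simp only [exts, Set.mem_setOf_eq, Set.mem_singleton_iff]
        constructor
        · rintro ⟨hp, hlen⟩
          exact (hp.eq_of_length (by omega)).symm
        · rintro rfl
          exact ⟨List.prefix_refl _, by omega⟩
      simp [this]
    | succ d ih =>
      intro s hs
      have hlt : s.length < h n := by omega
      rw [hex n hn s hlt, ih (s ++ [false]) (by simp; omega), ih (s ++ [true]) (by simp; omega),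
        exts_split (show s.length < L by omega), Set.biUnion_union]
  intro s hs
  exact key (L - s.length) s (by omega)

lemma classOf_congr {μ : Measure CSp} {O O' : Set (ℕ × List Bool)}
    (h : openSet O = openSet O') : classOf μ O = classOf μ O' := by
  unfold classOf
  congr 1
  exact Subtype.ext h


/-- the key combinatorial lemma: if `k n ∈ X n \ Y n` for `n` in an infinite set `B`, the
families `X` and `Y` are each pairwise disjoint over `B`, and all the partial unions over
subsets of `B` agree mod finite, we get a contradiction. -/
lemma combin (B : Set ℕ) (hB : B.Infinite) (X Y : ℕ → Set ℕ) (k : ℕ → ℕ)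
    (hkX : ∀ n ∈ B, k n ∈ X n) (hkY : ∀ n ∈ B, k n ∉ Y n)
    (hXd : ∀ m ∈ B, ∀ n ∈ B, m ≠ n → X m ∩ X n = ∅)
    (hYd : ∀ m ∈ B, ∀ n ∈ B, m ≠ n → Y m ∩ Y n = ∅)
    (hsd : ∀ J ⊆ B, (symmDiff (⋃ n ∈ J, X n) (⋃ n ∈ J, Y n)).Finite) : False := by
  have hkinj : Set.InjOn k B := by
    intro m hm n hn hmn
    by_contra hne
    have : k m ∈ X m ∩ X n := ⟨hkX m hm, hmn ▸ hkX n hn⟩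
    rw [hXd m hm n hn hne] at this
    exact this
  -- the main engine
  have main : ∀ J ⊆ B, J.Infinite → (∀ n ∈ J, ∀ m ∈ J, k n ∉ Y m) → False := by
    intro J hJB hJinf hJ
    have hsub : k '' J ⊆ symmDiff (⋃ n ∈ J, X n) (⋃ n ∈ J, Y n) := by
      rintro - ⟨n, hn, rfl⟩
      rw [Set.mem_symmDiff]
      refine Or.inl ⟨Set.mem_biUnion hn (hkX n (hJB hn)), ?_⟩
      simp only [Set.mem_iUnion, not_exists]
      intro m hm
      exact hJ n hn m hm
    exact (hJinf.image (hkinj.mono hJB)) ((hsd J hJB).subset hsub)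
  -- `T` : the set of `n ∈ B` whose witness point lands in some `Y m`
  set T : Set ℕ := {n | n ∈ B ∧ ∃ m ∈ B, k n ∈ Y m} with hTdef
  by_cases hT : T.Infinite
  · -- choose `π n` to be the unique column whose `Y` contains `k n`
    have hπex : ∀ n, ∃ m, n ∈ T → (m ∈ B ∧ k n ∈ Y m) := by
      intro n
      by_cases hn : n ∈ T
      · obtain ⟨-, m, hm, hkm⟩ := hn
        exact ⟨m, fun _ => ⟨hm, hkm⟩⟩
      · exact ⟨0, fun h => absurd h hn⟩
    choose π hπ using hπex
    have hπne : ∀ n ∈ T, π n ≠ n := by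
      intro n hn h
      have h2 := (hπ n hn).2
      rw [h] at h2
      exact hkY n hn.1 h2
    have hYuniq : ∀ n ∈ T, ∀ m ∈ B, m ≠ π n → k n ∉ Y m := by
      intro n hn m hm hne hmem
      have h2 : k n ∈ Y m ∩ Y (π n) := ⟨hmem, (hπ n hn).2⟩
      rw [hYd m hm (π n) (hπ n hn).1 hne] at h2
      exact h2
    by_cases hfib : ∃ v, {n ∈ T | π n = v}.Infinite
    · -- some fiber of `π` is infinite
      obtain ⟨v, hv⟩ := hfib
      refine main ({n ∈ T | π n = v} \ {v}) ?_ (hv.diff (Set.finite_singleton v)) ?_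
      · intro n hn
        exact hn.1.1.1
      · intro n hn m hm hmem
        have hmne : m ≠ π n := by
          rw [hn.1.2]
          exact fun h => hm.2 h
        exact hYuniq n hn.1.1 m hm.1.1.1 hmne hmem
    · -- all fibers finite: build a sequence avoiding its own `π`-images
      push_neg at hfib
      have hstep : ∀ F : Finset ℕ, ∃ n, n ∈ T ∧ n ∉ F ∧ π n ∉ F := by
        intro F
        have hfin : ((↑F : Set ℕ) ∪ ⋃ v ∈ F, {n ∈ T | π n = v}).Finite :=
          F.finite_toSet.union
            (Set.Finite.biUnion F.finite_toSet fun v _ => (hfib v))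
        obtain ⟨n, hn⟩ := (hT.diff hfin).nonempty
        refine ⟨n, hn.1, fun h => hn.2 (Or.inl h), fun h => ?_⟩
        exact hn.2 (Or.inr (Set.mem_biUnion h ⟨hn.1, rfl⟩))
      choose c hc1 hc2 hc3 using hstep
      let Fs : ℕ → Finset ℕ :=
        fun m => Nat.rec ∅ (fun _ Fm => insert (c Fm) (insert (π (c Fm)) Fm)) m
      have hFsucc : ∀ m, Fs (m + 1) = insert (c (Fs m)) (insert (π (c (Fs m))) (Fs m)) :=
        fun m => rfl
      have hmono : ∀ m m', m ≤ m' → Fs m ⊆ Fs m' := by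
        intro m m' h
        obtain ⟨j, rfl⟩ := Nat.exists_eq_add_of_le h
        clear h
        induction j with
        | zero => exact subset_rfl
        | succ j ih =>
          rw [show m + (j + 1) = (m + j) + 1 from rfl, hFsucc]
          exact ih.trans ((Finset.subset_insert _ _).trans (Finset.subset_insert _ _))
      set a : ℕ → ℕ := fun m => c (Fs m) with ha
      have hamem : ∀ m, a m ∈ Fs (m + 1) := by
        intro m; rw [hFsucc]; exact Finset.mem_insert_self _ _
      have hπmem : ∀ m, π (a m) ∈ Fs (m + 1) := by
        intro m; rw [hFsucc]
        exact Finset.mem_insert_of_mem (Finset.mem_insert_self _ _)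
      have hanotin : ∀ m, a m ∉ Fs m := fun m => hc2 (Fs m)
      have hπa : ∀ m j, π (a m) ≠ a j := by
        intro m j
        rcases lt_trichotomy j m with hj | rfl | hj
        · intro h
          exact hc3 (Fs m) (h ▸ hmono (j + 1) m hj (hamem j))
        · exact hπne (a j) (hc1 (Fs j))
        · intro h
          exact hanotin j (h ▸ hmono (m + 1) j hj (hπmem m))
      have hainj : Function.Injective a := by
        intro m m' h
        by_contra hne
        rcases lt_or_gt_of_ne hne with hlt | hlt
        · exact hanotin m' (h ▸ hmono (m + 1) m' hlt (hamem m))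
        · exact hanotin m (h ▸ hmono (m' + 1) m hlt (hamem m'))
      refine main (Set.range a) ?_ (Set.infinite_range_of_injective hainj) ?_
      · rintro - ⟨m, rfl⟩
        exact (hc1 (Fs m)).1
      · rintro - ⟨m, rfl⟩ - ⟨j, rfl⟩ hmem
        exact hYuniq (a m) (hc1 (Fs m)) (a j) (hc1 (Fs j)).1 (Ne.symm (hπa m j)) hmem
  · -- `T` finite : the points `k n`, `n ∈ B \ T`, avoid all the `Y`'s
    refine main (B \ T) Set.diff_subset (hB.diff (Set.not_infinite.mp hT)) ?_
    intro n hn m hm hmem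
    exact hn.2 ⟨hn.1, m, hm.1, hmem⟩



/-- the key consequence of being liftings of the same `φ`: the column unions along any
`J ⊆ A` (with `f ≤ g` on `J`) agree modulo a finite set. -/
lemma column_symmDiff {μ : Measure CSp} (φ : MAlg μ → PFin ℕ)
    (A : Set ℕ) (f g : ℕ → ℕ) (Φf Φg : MAlg μ → Set ℕ)
    (hliftf : IsLifting φ Φf) (hliftg : IsLifting φ Φg)
    (hcompf : ∀ O ⊆ BfA f A, PhiSet Φf O = PhiUnion Φf O)
    (hcompg : ∀ O ⊆ BfA g A, PhiSet Φg O = PhiUnion Φg O)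
    (hexactg : ∀ n ∈ A, ∀ s : List Bool, s.length < g n →
      PhiPt Φg n s = PhiPt Φg n (s ++ [false]) ∪ PhiPt Φg n (s ++ [true]))
    (u : ℕ → List Bool) (J : Set ℕ) (hJA : J ⊆ A) (hlen : ∀ n ∈ J, (u n).length = f n)
    (hfg : ∀ n ∈ J, f n ≤ g n) :
    (symmDiff (⋃ n ∈ J, PhiPt Φf n (u n)) (⋃ n ∈ J, PhiPt Φg n (u n))).Finite := by
  set Uf : Set (ℕ × List Bool) := {p | p.1 ∈ J ∧ p.2 = u p.1} with hUf
  set Ug : Set (ℕ × List Bool) := {p | p.1 ∈ J ∧ p.2 ∈ exts (u p.1) (g p.1)} with hUg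
  have hOf : Uf ⊆ BfA f A := by
    rintro ⟨n, s⟩ ⟨hn, hs⟩
    have hs' : s = u n := hs
    subst hs'
    exact ⟨hJA hn, hlen n hn⟩
  have hOg : Ug ⊆ BfA g A := by
    rintro ⟨n, s⟩ ⟨hn, hp⟩
    exact ⟨hJA hn, hp.2⟩
  have hopen : openSet Uf = openSet Ug := by
    unfold openSet
    ext ⟨a, x⟩
    simp only [Set.mem_iUnion, exists_prop, Prod.exists]
    constructor
    · rintro ⟨n, s, ⟨hn, hs⟩, hx⟩
      have hs' : s = u n := hs
      subst hs'
      have hcylx : x ∈ cyl (u n) := by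
        have : (a, x) ∈ ({n} : Set ℕ) ×ˢ cyl (u n) := hx
        exact this.2
      have han : a = n := by
        have : (a, x) ∈ ({n} : Set ℕ) ×ˢ cyl (u n) := hx
        exact this.1
      rw [cyl_eq_iUnion (show (u n).length ≤ g n by rw [hlen n hn]; exact hfg n hn)] at hcylx
      obtain ⟨t, ht, hxt⟩ := Set.mem_iUnion₂.mp hcylx
      exact ⟨n, t, ⟨hn, ht⟩, by exact ⟨han, hxt⟩⟩
    · rintro ⟨n, t, ⟨hn, ht⟩, hx⟩
      have han : a = n := hx.1
      have hxt : x ∈ cyl t := hx.2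
      refine ⟨n, u n, ⟨hn, rfl⟩, ⟨han, ?_⟩⟩
      exact cyl_mono ht.1 hxt
  have hcl : classOf μ Uf = classOf μ Ug := classOf_congr hopen
  have hfin : (symmDiff (PhiSet Φf Uf) (PhiSet Φg Ug)).Finite := by
    have hq : PFin.mk (PhiSet Φf Uf) = PFin.mk (PhiSet Φg Ug) := by
      rw [PhiSet, PhiSet, hliftf, hliftg, hcl]
    exact Quotient.exact hq
  have e1 : PhiSet Φf Uf = ⋃ n ∈ J, PhiPt Φf n (u n) := by
    rw [hcompf Uf hOf]
    unfold PhiUnion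
    ext x
    simp only [Set.mem_iUnion, exists_prop, Prod.exists]
    constructor
    · rintro ⟨n, s, ⟨hn, hs⟩, hx⟩
      have hs' : s = u n := hs
      subst hs'
      exact ⟨n, hn, hx⟩
    · rintro ⟨n, hn, hx⟩
      exact ⟨n, u n, ⟨hn, rfl⟩, hx⟩
  have e2 : PhiSet Φg Ug = ⋃ n ∈ J, PhiPt Φg n (u n) := by
    rw [hcompg Ug hOg]
    unfold PhiUnion
    ext x
    simp only [Set.mem_iUnion, exists_prop, Prod.exists]
    constructor
    · rintro ⟨n, t, ⟨hn, ht⟩, hx⟩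
      refine ⟨n, hn, ?_⟩
      rw [phiPt_level Φg g A hexactg (hJA hn) (le_refl (g n)) (u n)
        (by rw [hlen n hn]; exact hfg n hn)]
      exact Set.mem_biUnion ht hx
    · rintro ⟨n, hn, hx⟩
      rw [phiPt_level Φg g A hexactg (hJA hn) (le_refl (g n)) (u n)
        (by rw [hlen n hn]; exact hfg n hn)] at hx
      obtain ⟨t, ht, hxt⟩ := Set.mem_iUnion₂.mp hx
      exact ⟨n, t, ⟨hn, ht⟩, hxt⟩
  rw [e1, e2] at hfin
  exact hfin

/-- the liftings `Φ_f` cohere: if `f ≤* g` and `Φ_f`, `Φ_g` are liftings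
of `φ` that are exact and complete on the strata over `A` (and satisfy the disjointness
condition), then `Φ_g(n,s) = Φ_f(n,s)` for all but finitely many `(n,s) ∈ C_f`. -/
theorem liftings_cohere
    (μ : Measure CSp) (hμ : IsMeasureOK μ)
    (φ : MAlg μ → PFin ℕ) (hφ : IsEmbedding μ φ)
    (A : Set ℕ) (hA : A.Infinite)
    (f g : ℕ → ℕ) (hfg : {n : ℕ | ¬ f n ≤ g n}.Finite)
    (Φf Φg : MAlg μ → Set ℕ)
    (hliftf : IsLifting φ Φf) (hliftg : IsLifting φ Φg)
    (hcompf : ∀ O ⊆ BfA f A, PhiSet Φf O = PhiUnion Φf O)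
    (hcompg : ∀ O ⊆ BfA g A, PhiSet Φg O = PhiUnion Φg O)
    (hdisjf : ∀ (n : ℕ) (s : List Bool) (m : ℕ) (t : List Bool),
      basic n s ∩ basic m t = ∅ → PhiPt Φf n s ∩ PhiPt Φf m t = ∅)
    (hdisjg : ∀ (n : ℕ) (s : List Bool) (m : ℕ) (t : List Bool),
      basic n s ∩ basic m t = ∅ → PhiPt Φg n s ∩ PhiPt Φg m t = ∅)
    (hexactf : ∀ n ∈ A, ∀ s : List Bool, s.length < f n →
      PhiPt Φf n s = PhiPt Φf n (s ++ [false]) ∪ PhiPt Φf n (s ++ [true]))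
    (hexactg : ∀ n ∈ A, ∀ s : List Bool, s.length < g n →
      PhiPt Φg n s = PhiPt Φg n (s ++ [false]) ∪ PhiPt Φg n (s ++ [true])) :
    {p : ℕ × List Bool | (p.1 ∈ A ∧ p.2.length ≤ f p.1) ∧
      PhiPt Φg p.1 p.2 ≠ PhiPt Φf p.1 p.2}.Finite := by
  by_contra hinf
  set S : Set (ℕ × List Bool) := {p : ℕ × List Bool | (p.1 ∈ A ∧ p.2.length ≤ f p.1) ∧
      PhiPt Φg p.1 p.2 ≠ PhiPt Φf p.1 p.2} with hSdef
  have hSinf : S.Infinite := hinf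
  -- the first coordinates of the bad pairs form an infinite set
  have hfst : (Prod.fst '' S).Infinite := by
    intro hfin
    apply hSinf
    have hsub : S ⊆ ⋃ n ∈ Prod.fst '' S, ({n} : Set ℕ) ×ˢ {s : List Bool | s.length ≤ f n} := by
      rintro ⟨n, s⟩ hp
      exact Set.mem_biUnion ⟨(n, s), hp, rfl⟩ ⟨rfl, hp.1.2⟩
    exact (hfin.biUnion fun n _ =>
      (Set.finite_singleton n).prod (List.finite_length_le Bool (f n))).subset hsub
  set B1 : Set ℕ := (Prod.fst '' S) \ {n : ℕ | ¬ f n ≤ g n} with hB1def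
  have hB1 : B1.Infinite := hfst.diff hfg
  have hB1A : ∀ n ∈ B1, n ∈ A := by
    rintro n ⟨⟨p, hp, rfl⟩, -⟩
    exact hp.1.1
  have hB1fg : ∀ n ∈ B1, f n ≤ g n := fun n hn => not_not.mp hn.2
  -- reduction: a bad pair gives a bad pair at level exactly `f n`
  have hred : ∀ n ∈ B1, ∃ v : List Bool, v.length = f n ∧ PhiPt Φg n v ≠ PhiPt Φf n v := by
    intro n hn
    have hfgn : f n ≤ g n := hB1fg n hn
    have hnA : n ∈ A := hB1A n hn
    obtain ⟨⟨p, hp, rfl⟩, -⟩ := hn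
    by_contra hall
    push_neg at hall
    apply hp.2
    rw [phiPt_level Φg g A hexactg hnA hfgn p.2 hp.1.2,
      phiPt_level Φf f A hexactf hnA (le_refl (f p.1)) p.2 hp.1.2]
    exact Set.iUnion₂_congr fun t ht => hall t ht.2
  -- choose a level-`f n` bad sequence and a point in the symmetric difference
  have hchoice : ∀ n, ∃ (v : List Bool) (kk : ℕ), n ∈ B1 →
      (v.length = f n ∧ kk ∈ symmDiff (PhiPt Φg n v) (PhiPt Φf n v)) := by
    intro n
    by_cases hn : n ∈ B1
    · obtain ⟨v, hv1, hv2⟩ := hred n hn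
      obtain ⟨kk, hkk⟩ := Set.symmDiff_nonempty.mpr hv2
      exact ⟨v, kk, fun _ => ⟨hv1, hkk⟩⟩
    · exact ⟨[], 0, fun h => absurd h hn⟩
  choose u k hk using hchoice
  -- the two basic facts we feed to `combin`
  have hsdJ : ∀ J ⊆ B1,
      (symmDiff (⋃ n ∈ J, PhiPt Φf n (u n)) (⋃ n ∈ J, PhiPt Φg n (u n))).Finite :=
    fun J hJ => column_symmDiff φ A f g Φf Φg hliftf hliftg hcompf hcompg hexactg u J
      (fun n hn => hB1A n (hJ hn)) (fun n hn => (hk n (hJ hn)).1)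
      (fun n hn => hB1fg n (hJ hn))
  have hdf : ∀ m ∈ B1, ∀ n ∈ B1, m ≠ n → PhiPt Φf m (u m) ∩ PhiPt Φf n (u n) = ∅ :=
    fun m _ n _ h => hdisjf m (u m) n (u n) (basic_disj_ne h _ _)
  have hdg : ∀ m ∈ B1, ∀ n ∈ B1, m ≠ n → PhiPt Φg m (u m) ∩ PhiPt Φg n (u n) = ∅ :=
    fun m _ n _ h => hdisjg m (u m) n (u n) (basic_disj_ne h _ _)
  -- split according to the side of the symmetric difference
  set P : Set ℕ := {n ∈ B1 | k n ∈ PhiPt Φg n (u n) ∧ k n ∉ PhiPt Φf n (u n)} with hPdef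
  set Q : Set ℕ := {n ∈ B1 | k n ∈ PhiPt Φf n (u n) ∧ k n ∉ PhiPt Φg n (u n)} with hQdef
  have hPQ : B1 ⊆ P ∪ Q := by
    intro n hn
    rcases Set.mem_symmDiff.mp (hk n hn).2 with h | h
    · exact Or.inl ⟨hn, h⟩
    · exact Or.inr ⟨hn, h⟩
  have hPorQ : P.Infinite ∨ Q.Infinite := by
    by_contra h
    push_neg at h
    exact hB1 ((h.1.union h.2).subset hPQ)
  rcases hPorQ with hP | hQ
  · exact combin P hP (fun n => PhiPt Φg n (u n)) (fun n => PhiPt Φf n (u n)) k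
      (fun n hn => hn.2.1) (fun n hn => hn.2.2)
      (fun m hm n hn h => hdg m hm.1 n hn.1 h)
      (fun m hm n hn h => hdf m hm.1 n hn.1 h)
      (fun J hJ => by
        rw [symmDiff_comm]
        exact hsdJ J (fun n hn => (hJ hn).1))
  · exact combin Q hQ (fun n => PhiPt Φf n (u n)) (fun n => PhiPt Φg n (u n)) k
      (fun n hn => hn.2.1) (fun n hn => hn.2.2)
      (fun m hm n hn h => hdf m hm.1 n hn.1 h)
      (fun m hm n hn h => hdg m hm.1 n hn.1 h)
      (fun J hJ => hsdJ J (fun n hn => (hJ hn).1))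


end Paper
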